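/- Suppose all entries of Γ are nonnegative, a_i > Σ_{j≠i,j∈N} Γ_{ij} with a_i > 0 for i ∈ N₁, and γ_i · (Σ_{j∈N} Γ_{ij}) < 1 with γ_i > 0 for i ∈ N₂. Let σ = max{ max_{i∈N₁} (Σ_{j≠i,j∈N} Γ_{ij})/a_i , max_{i∈N₂} (γ_i Σ_{j≠i,j∈N} Γ_{ij})/(1 − γ_iΓ_{ii}) }. Then σ < 1, and if u* satisfies Γ̄u* = b̄, the iteration map T satisfies ‖T(u) − u*‖_∞ ≤ σ‖u − u*‖_∞ for all u ∈ ℝ^N, i.e., T is a contraction in the max norm around u*. -/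

import Mathlib

open Matrix Finset Filter Topology

section Defs

variable {m n : ℕ}

/-- Γ̃ ∈ ℝ^{m×N}: rows of the game players. Γ̃_{ii} = a_i, Γ̃_{ij} = Γ_{ij} for j ≠ i. -/
def GammaTilde (Γ : Matrix (Fin m ⊕ Fin n) (Fin m ⊕ Fin n) ℝ) (a : Fin m → ℝ) :
    Matrix (Fin m) (Fin m ⊕ Fin n) ℝ :=
  Matrix.of fun i j => if j = Sum.inl i then a i else Γ (Sum.inl i) j

/-- Γ̂ ∈ ℝ^{n×N}: rows of the target seekers. Γ̂_{kk} = 1 - γ_kΓ_{kk}, Γ̂_{kj} = -γ_kΓ_{kj}. -/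
def GammaHat (Γ : Matrix (Fin m ⊕ Fin n) (Fin m ⊕ Fin n) ℝ) (γ : Fin n → ℝ) :
    Matrix (Fin n) (Fin m ⊕ Fin n) ℝ :=
  Matrix.of fun k j =>
    if j = Sum.inr k then 1 - γ k * Γ (Sum.inr k) (Sum.inr k) else -(γ k * Γ (Sum.inr k) j)

/-- Γ̄ ∈ ℝ^{N×N}: Γ̃ stacked above Γ̂. -/
def GammaBar (Γ : Matrix (Fin m ⊕ Fin n) (Fin m ⊕ Fin n) ℝ) (a : Fin m → ℝ) (γ : Fin n → ℝ) :
    Matrix (Fin m ⊕ Fin n) (Fin m ⊕ Fin n) ℝ :=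
  Matrix.fromRows (GammaTilde Γ a) (GammaHat Γ γ)

/-- b̃ ∈ ℝ^m: b̃_i = a_iβ_i/α_i - n_{0,i}. -/
noncomputable def bTilde (n0 : Fin m ⊕ Fin n → ℝ) (α β a : Fin m → ℝ) : Fin m → ℝ :=
  fun i => a i * β i / α i - n0 (Sum.inl i)

/-- b̂ ∈ ℝ^n: b̂_k = γ_k n_{0,k}. -/
def bHat (n0 : Fin m ⊕ Fin n → ℝ) (γ : Fin n → ℝ) : Fin n → ℝ :=
  fun k => γ k * n0 (Sum.inr k)

/-- b̄ ∈ ℝ^N: b̃ stacked above b̂. -/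
noncomputable def bBar (n0 : Fin m ⊕ Fin n → ℝ) (α β a : Fin m → ℝ) (γ : Fin n → ℝ) : Fin m ⊕ Fin n → ℝ :=
  Sum.elim (bTilde n0 α β a) (bHat n0 γ)

/-- max norm of a vector -/
noncomputable def vecNormInf {ι : Type*} [Fintype ι] (v : ι → ℝ) : ℝ := ⨆ i, |v i|

/-- induced ∞-norm of a matrix: max absolute row sum -/
noncomputable def matNormInf {ι κ : Type*} [Fintype ι] [Fintype κ] (A : Matrix ι κ ℝ) : ℝ :=
  ⨆ i, ∑ j, |A i j|

/-- iteration map of the distributed algorithm -/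
noncomputable def iterMap (Γ : Matrix (Fin m ⊕ Fin n) (Fin m ⊕ Fin n) ℝ)
    (n0 : Fin m ⊕ Fin n → ℝ) (α β a : Fin m → ℝ) (γ : Fin n → ℝ) :
    (Fin m ⊕ Fin n → ℝ) → (Fin m ⊕ Fin n → ℝ) := fun u =>
  Sum.elim
    (fun i => β i / α i -
      (1 / a i) * (n0 (Sum.inl i) + ∑ j ∈ univ.erase (Sum.inl i), Γ (Sum.inl i) j * u j))
    (fun k => (γ k / (1 - γ k * Γ (Sum.inr k) (Sum.inr k))) *
      (n0 (Sum.inr k) + ∑ j ∈ univ.erase (Sum.inr k), Γ (Sum.inr k) j * u j))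

end Defs

/-- σ < 1 and the iteration map is a σ-contraction in the max norm
around the solution u* of Γ̄u* = b̄. -/
theorem statement14 (m n : ℕ) (hm : 0 < m) (hn : 0 < n)
    (Γ : Matrix (Fin m ⊕ Fin n) (Fin m ⊕ Fin n) ℝ) (hΓ : ∀ i j, 0 ≤ Γ i j)
    (n0 : Fin m ⊕ Fin n → ℝ) (α β a : Fin m → ℝ) (γ : Fin n → ℝ)
    (hαpos : ∀ i, 0 < α i) (hβpos : ∀ i, 0 < β i) (hapos : ∀ i, 0 < a i)
    (hγpos : ∀ k, 0 < γ k)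
    (hγ : ∀ k : Fin n, γ k * ∑ j, Γ (Sum.inr k) j < 1)
    (ha : ∀ i : Fin m, ∑ j ∈ univ.erase (Sum.inl i), Γ (Sum.inl i) j < a i)
    (σ : ℝ)
    (hσ : σ = max
      (⨆ i : Fin m, (∑ j ∈ univ.erase (Sum.inl i), Γ (Sum.inl i) j) / a i)
      (⨆ k : Fin n, (γ k * ∑ j ∈ univ.erase (Sum.inr k), Γ (Sum.inr k) j) /
        (1 - γ k * Γ (Sum.inr k) (Sum.inr k))))
    (ustar : Fin m ⊕ Fin n → ℝ)
    (hustar : (GammaBar Γ a γ).mulVec ustar = bBar n0 α β a γ) :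
    σ < 1 ∧
    ∀ u : Fin m ⊕ Fin n → ℝ,
      vecNormInf (fun i => iterMap Γ n0 α β a γ u i - ustar i) ≤
        σ * vecNormInf (fun i => u i - ustar i) := by
  haveI hne1 : Nonempty (Fin m) := ⟨⟨0, hm⟩⟩
  haveI hne2 : Nonempty (Fin n) := ⟨⟨0, hn⟩⟩
  haveI hne : Nonempty (Fin m ⊕ Fin n) := ⟨Sum.inl ⟨0, hm⟩⟩
  -- positive denominators for target seekers
  have hd : ∀ k : Fin n, 0 < 1 - γ k * Γ (Sum.inr k) (Sum.inr k) := by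
    intro k
    have h1 : γ k * Γ (Sum.inr k) (Sum.inr k) ≤ γ k * ∑ j, Γ (Sum.inr k) j :=
      mul_le_mul_of_nonneg_left
        (Finset.single_le_sum (fun j _ => hΓ _ j) (Finset.mem_univ _)) (hγpos k).le
    linarith [hγ k]
  have hd2 : ∀ k : Fin n, γ k * ∑ j ∈ univ.erase (Sum.inr k), Γ (Sum.inr k) j
      < 1 - γ k * Γ (Sum.inr k) (Sum.inr k) := by
    intro k
    have hsplit : (∑ j, Γ (Sum.inr k) j)
        = Γ (Sum.inr k) (Sum.inr k) + ∑ j ∈ univ.erase (Sum.inr k), Γ (Sum.inr k) j :=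
      (Finset.add_sum_erase univ _ (Finset.mem_univ _)).symm
    have h := hγ k
    rw [hsplit, mul_add] at h
    linarith
  set f1 : Fin m → ℝ := fun i => (∑ j ∈ univ.erase (Sum.inl i), Γ (Sum.inl i) j) / a i with hf1
  set f2 : Fin n → ℝ := fun k => (γ k * ∑ j ∈ univ.erase (Sum.inr k), Γ (Sum.inr k) j) /
      (1 - γ k * Γ (Sum.inr k) (Sum.inr k)) with hf2
  have hσlt : σ < 1 := by
    rw [hσ]
    obtain ⟨i0, hi0⟩ := Finite.exists_max f1
    obtain ⟨k0, hk0⟩ := Finite.exists_max f2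
    have h1 : (⨆ i, f1 i) ≤ f1 i0 := ciSup_le hi0
    have h2 : (⨆ k, f2 k) ≤ f2 k0 := ciSup_le hk0
    have hl1 : f1 i0 < 1 := (div_lt_one (hapos i0)).2 (ha i0)
    have hl2 : f2 k0 < 1 := (div_lt_one (hd k0)).2 (hd2 k0)
    exact max_lt (lt_of_le_of_lt h1 hl1) (lt_of_le_of_lt h2 hl2)
  have hb1 : BddAbove (Set.range f1) := (Set.finite_range _).bddAbove
  have hb2 : BddAbove (Set.range f2) := (Set.finite_range _).bddAbove
  have hσ1 : ∀ i : Fin m, f1 i ≤ σ := fun i => by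
    rw [hσ]; exact le_trans (le_ciSup hb1 i) (le_max_left _ _)
  have hσ2 : ∀ k : Fin n, f2 k ≤ σ := fun k => by
    rw [hσ]; exact le_trans (le_ciSup hb2 k) (le_max_right _ _)
  -- fixed point equations
  have hfix1 : ∀ i : Fin m,
      a i * ustar (Sum.inl i) + ∑ j ∈ univ.erase (Sum.inl i), Γ (Sum.inl i) j * ustar j
        = a i * β i / α i - n0 (Sum.inl i) := by
    intro i
    have h := congrFun hustar (Sum.inl i)
    simp only [GammaBar, Matrix.fromRows_apply_inl, Matrix.mulVec, dotProduct, GammaTilde,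
      Matrix.of_apply, Sum.elim_inl, bBar, bTilde] at h
    rw [← Finset.add_sum_erase univ _ (Finset.mem_univ (Sum.inl i))] at h
    rw [if_pos rfl] at h
    have hcongr : (∑ j ∈ univ.erase (Sum.inl i),
        (if j = Sum.inl i then a i else Γ (Sum.inl i) j) * ustar j)
        = ∑ j ∈ univ.erase (Sum.inl i), Γ (Sum.inl i) j * ustar j :=
      Finset.sum_congr rfl fun j hj => by rw [if_neg (Finset.ne_of_mem_erase hj)]
    rw [hcongr] at h
    exact h
  have hfix2 : ∀ k : Fin n,
      (1 - γ k * Γ (Sum.inr k) (Sum.inr k)) * ustar (Sum.inr k)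
        - γ k * ∑ j ∈ univ.erase (Sum.inr k), Γ (Sum.inr k) j * ustar j
        = γ k * n0 (Sum.inr k) := by
    intro k
    have h := congrFun hustar (Sum.inr k)
    simp only [GammaBar, Matrix.fromRows_apply_inr, Matrix.mulVec, dotProduct, GammaHat,
      Matrix.of_apply, Sum.elim_inr, bBar, bHat] at h
    rw [← Finset.add_sum_erase univ _ (Finset.mem_univ (Sum.inr k))] at h
    rw [if_pos rfl] at h
    have hcongr : (∑ j ∈ univ.erase (Sum.inr k),
        (if j = Sum.inr k then 1 - γ k * Γ (Sum.inr k) (Sum.inr k)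
          else -(γ k * Γ (Sum.inr k) j)) * ustar j)
        = ∑ j ∈ univ.erase (Sum.inr k), -(γ k * Γ (Sum.inr k) j) * ustar j :=
      Finset.sum_congr rfl fun j hj => by rw [if_neg (Finset.ne_of_mem_erase hj)]
    rw [hcongr] at h
    have hneg : (∑ j ∈ univ.erase (Sum.inr k), -(γ k * Γ (Sum.inr k) j) * ustar j)
        = -(γ k * ∑ j ∈ univ.erase (Sum.inr k), Γ (Sum.inr k) j * ustar j) := by
      rw [Finset.mul_sum, ← Finset.sum_neg_distrib]
      exact Finset.sum_congr rfl fun j _ => by ring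
    rw [hneg] at h
    linarith
  refine ⟨hσlt, fun u => ?_⟩
  set K := vecNormInf (fun j => u j - ustar j) with hKdef
  have hbK : BddAbove (Set.range fun j => |u j - ustar j|) := (Set.finite_range _).bddAbove
  have hKb : ∀ j, |u j - ustar j| ≤ K := fun j => le_ciSup hbK j
  have hK0 : 0 ≤ K := le_trans (abs_nonneg _) (hKb (Sum.inl ⟨0, hm⟩))
  have hsumabs : ∀ (p : Fin m ⊕ Fin n),
      |∑ j ∈ univ.erase p, Γ p j * (u j - ustar j)|
        ≤ (∑ j ∈ univ.erase p, Γ p j) * K := by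
    intro p
    calc |∑ j ∈ univ.erase p, Γ p j * (u j - ustar j)|
        ≤ ∑ j ∈ univ.erase p, |Γ p j * (u j - ustar j)| := Finset.abs_sum_le_sum_abs _ _
      _ ≤ ∑ j ∈ univ.erase p, Γ p j * K := by
          refine Finset.sum_le_sum fun j _ => ?_
          rw [abs_mul, abs_of_nonneg (hΓ p j)]
          exact mul_le_mul_of_nonneg_left (hKb j) (hΓ p j)
      _ = (∑ j ∈ univ.erase p, Γ p j) * K := by rw [Finset.sum_mul]
  have key : ∀ p : Fin m ⊕ Fin n,
      |iterMap Γ n0 α β a γ u p - ustar p| ≤ σ * K := by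
    intro p
    cases p with
    | inl i =>
      have hai := hapos i
      have hdiff : iterMap Γ n0 α β a γ u (Sum.inl i) - ustar (Sum.inl i)
          = -(1 / a i) * ∑ j ∈ univ.erase (Sum.inl i), Γ (Sum.inl i) j * (u j - ustar j) := by
        have h := hfix1 i
        set Su := ∑ j ∈ univ.erase (Sum.inl i), Γ (Sum.inl i) j * u j with hSu
        set Ss := ∑ j ∈ univ.erase (Sum.inl i), Γ (Sum.inl i) j * ustar j with hSs
        have hs : ∑ j ∈ univ.erase (Sum.inl i), Γ (Sum.inl i) j * (u j - ustar j)
            = Su - Ss := by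
          rw [hSu, hSs, ← Finset.sum_sub_distrib]
          exact Finset.sum_congr rfl fun j _ => mul_sub _ _ _
        have hane : a i ≠ 0 := (hapos i).ne'
        have hust : ustar (Sum.inl i)
            = (a i * β i / α i - n0 (Sum.inl i) - Ss) / a i := by
          field_simp
          linarith
        simp only [iterMap, Sum.elim_inl, ← hSu]
        rw [hust, hs]
        field_simp
        ring
      rw [hdiff, abs_mul, abs_neg, abs_of_nonneg (by positivity : (0:ℝ) ≤ 1 / a i)]
      calc 1 / a i * |∑ j ∈ univ.erase (Sum.inl i), Γ (Sum.inl i) j * (u j - ustar j)|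
          ≤ 1 / a i * ((∑ j ∈ univ.erase (Sum.inl i), Γ (Sum.inl i) j) * K) :=
            mul_le_mul_of_nonneg_left (hsumabs _) (by positivity)
        _ = f1 i * K := by simp only [hf1]; ring
        _ ≤ σ * K := mul_le_mul_of_nonneg_right (hσ1 i) hK0
    | inr k =>
      have hdk := hd k
      have hdiff : iterMap Γ n0 α β a γ u (Sum.inr k) - ustar (Sum.inr k)
          = (γ k / (1 - γ k * Γ (Sum.inr k) (Sum.inr k)))
            * ∑ j ∈ univ.erase (Sum.inr k), Γ (Sum.inr k) j * (u j - ustar j) := by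
        have h := hfix2 k
        set Su := ∑ j ∈ univ.erase (Sum.inr k), Γ (Sum.inr k) j * u j with hSu
        set Ss := ∑ j ∈ univ.erase (Sum.inr k), Γ (Sum.inr k) j * ustar j with hSs
        have hs : ∑ j ∈ univ.erase (Sum.inr k), Γ (Sum.inr k) j * (u j - ustar j)
            = Su - Ss := by
          rw [hSu, hSs, ← Finset.sum_sub_distrib]
          exact Finset.sum_congr rfl fun j _ => mul_sub _ _ _
        have hdne : 1 - γ k * Γ (Sum.inr k) (Sum.inr k) ≠ 0 := hdk.ne'
        have hust : ustar (Sum.inr k)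
            = (γ k * n0 (Sum.inr k) + γ k * Ss)
              / (1 - γ k * Γ (Sum.inr k) (Sum.inr k)) := by
          field_simp
          linarith
        simp only [iterMap, Sum.elim_inr, ← hSu]
        rw [hust, hs]
        field_simp
        ring
      rw [hdiff, abs_mul, abs_of_nonneg (div_nonneg (hγpos k).le hdk.le)]
      calc γ k / (1 - γ k * Γ (Sum.inr k) (Sum.inr k))
            * |∑ j ∈ univ.erase (Sum.inr k), Γ (Sum.inr k) j * (u j - ustar j)|
          ≤ γ k / (1 - γ k * Γ (Sum.inr k) (Sum.inr k))
            * ((∑ j ∈ univ.erase (Sum.inr k), Γ (Sum.inr k) j) * K) :=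
            mul_le_mul_of_nonneg_left (hsumabs _) (div_nonneg (hγpos k).le hdk.le)
        _ = f2 k * K := by simp only [hf2]; ring
        _ ≤ σ * K := mul_le_mul_of_nonneg_right (hσ2 k) hK0
  exact ciSup_le key
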